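/- arXiv:1411.7795 — 2 statements merged into one kernel-verified Lean document; each statement's English description precedes it below -/
import Mathlib

section
/- Let $0 < \sigma^2 < 1$ and $0 < \gamma < \sigma^2$. Then the relative entropy function satisfies $H\big(\frac{\gamma+\sigma^2}{1+\sigma^2}\,\big|\,\frac{\sigma^2}{1+\sigma^2}\big) \ge \frac{\gamma^2}{3\sigma^2}$, where $H(x|p) = x\log\frac{x}{p} + (1-x)\log\frac{1-x}{1-p}$. -/
/-- Binary relative entropy `H(x|p) = x log(x/p) + (1-x) log((1-x)/(1-p))`. -/
noncomputable def relEntH (x p : ℝ) : ℝ :=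
  x * Real.log (x / p) + (1 - x) * Real.log ((1 - x) / (1 - p))

private lemma hasDerivA {y : ℝ} (hy : 0 < y) :
    HasDerivAt (fun y : ℝ => Real.log y - 2 * (y - 1) / (y + 1))
      (1 / y - 4 / (y + 1) ^ 2) y := by
  have h1 : HasDerivAt Real.log (1 / y) y := by
    simpa [one_div] using Real.hasDerivAt_log (ne_of_gt hy)
  have hne : y + 1 ≠ 0 := by linarith
  have h2 : HasDerivAt (fun y : ℝ => 2 * (y - 1) / (y + 1)) (4 / (y + 1) ^ 2) y := by
    have ha : HasDerivAt (fun y : ℝ => 2 * (y - 1)) 2 y := by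
      simpa using ((hasDerivAt_id y).sub_const 1).const_mul 2
    have hb : HasDerivAt (fun y : ℝ => y + 1) 1 y := (hasDerivAt_id y).add_const 1
    have := ha.fun_div hb hne
    refine this.congr_deriv ?_
    field_simp
    ring
  exact h1.sub h2

/-- `log t ≥ 2(t-1)/(t+1)` for `t ≥ 1`. -/
lemma logA {t : ℝ} (ht : 1 ≤ t) : 2 * (t - 1) / (t + 1) ≤ Real.log t := by
  set f : ℝ → ℝ := fun y => Real.log y - 2 * (y - 1) / (y + 1) with hf
  have hmono : MonotoneOn f (Set.Icc 1 t) := by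
    apply monotoneOn_of_deriv_nonneg (convex_Icc 1 t)
    · intro y hy
      have hy0 : (0:ℝ) < y := lt_of_lt_of_le one_pos hy.1
      exact ((hasDerivA hy0).continuousAt).continuousWithinAt
    · intro y hy
      rw [interior_Icc] at hy
      have hy0 : (0:ℝ) < y := lt_trans one_pos hy.1
      exact ((hasDerivA hy0).differentiableAt).differentiableWithinAt
    · intro y hy
      rw [interior_Icc] at hy
      have hy0 : (0:ℝ) < y := lt_trans one_pos hy.1
      rw [(hasDerivA hy0).deriv]
      have hne : (0:ℝ) < (y + 1) ^ 2 := by positivity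
      rw [sub_nonneg, div_le_div_iff₀ hne hy0]
      nlinarith [sq_nonneg (y - 1)]
  have h1 : f 1 ≤ f t := hmono (Set.left_mem_Icc.2 ht) (Set.right_mem_Icc.2 ht) ht
  have hf1 : f 1 = 0 := by simp [hf]
  rw [hf1] at h1
  simp only [hf] at h1
  linarith

private lemma hasDerivB {y : ℝ} (hy : 0 < y) :
    HasDerivAt (fun y : ℝ => Real.log y - y / 2 + 1 / (2 * y))
      (1 / y - 1 / 2 - 1 / (2 * y ^ 2)) y := by
  have h1 : HasDerivAt Real.log (1 / y) y := by
    simpa [one_div] using Real.hasDerivAt_log (ne_of_gt hy)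
  have h2 : HasDerivAt (fun y : ℝ => y / 2) (1 / 2) y := by
    simpa using (hasDerivAt_id y).div_const 2
  have h3 : HasDerivAt (fun y : ℝ => 1 / (2 * y)) (-(1 / (2 * y ^ 2))) y := by
    have hne : 2 * y ≠ 0 := by positivity
    have hb : HasDerivAt (fun y : ℝ => 2 * y) 2 y := by
      simpa using (hasDerivAt_id y).const_mul 2
    have := (hasDerivAt_const y (1:ℝ)).fun_div hb hne
    refine this.congr_deriv ?_
    field_simp
    ring
  have := (h1.sub h2).add h3
  refine this.congr_deriv ?_
  all_goals ring

/-- `log t ≥ t/2 - 1/(2t)` for `0 < t ≤ 1`. -/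
lemma logB {t : ℝ} (ht0 : 0 < t) (ht1 : t ≤ 1) : t / 2 - 1 / (2 * t) ≤ Real.log t := by
  set f : ℝ → ℝ := fun y => Real.log y - y / 2 + 1 / (2 * y) with hf
  have hanti : AntitoneOn f (Set.Icc t 1) := by
    apply antitoneOn_of_deriv_nonpos (convex_Icc t 1)
    · intro y hy
      have hy0 : (0:ℝ) < y := lt_of_lt_of_le ht0 hy.1
      exact ((hasDerivB hy0).continuousAt).continuousWithinAt
    · intro y hy
      rw [interior_Icc] at hy
      have hy0 : (0:ℝ) < y := lt_trans ht0 hy.1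
      exact ((hasDerivB hy0).differentiableAt).differentiableWithinAt
    · intro y hy
      rw [interior_Icc] at hy
      have hy0 : (0:ℝ) < y := lt_trans ht0 hy.1
      rw [(hasDerivB hy0).deriv]
      have h2 : (0:ℝ) < 2 * y ^ 2 := by positivity
      have heq : (1 / y - 1 / 2 - 1 / (2 * y ^ 2)) * (2 * y ^ 2) = -(y - 1) ^ 2 := by
        field_simp
        ring
      nlinarith [sq_nonneg (y - 1)]
  have h1 : f 1 ≤ f t := hanti (Set.left_mem_Icc.2 ht1) (Set.right_mem_Icc.2 ht1) ht1
  have hf1 : f 1 = 0 := by norm_num [hf]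
  rw [hf1] at h1
  simp only [hf] at h1
  linarith

/-- For `0 < σ² < 1` and `0 < γ < σ²`,
`H((γ+σ²)/(1+σ²) | σ²/(1+σ²)) ≥ γ²/(3σ²)`. -/
theorem relEnt_lower_bound (σ2 γ : ℝ) (hσ0 : 0 < σ2) (hσ1 : σ2 < 1)
    (hγ0 : 0 < γ) (hγσ : γ < σ2) :
    relEntH ((γ + σ2) / (1 + σ2)) (σ2 / (1 + σ2)) ≥ γ ^ 2 / (3 * σ2) := by
  have h1σ : (0:ℝ) < 1 + σ2 := by linarith
  have hγ1 : γ < 1 := lt_trans hγσ hσ1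
  have hratio1 : ((γ + σ2) / (1 + σ2)) / (σ2 / (1 + σ2)) = (γ + σ2) / σ2 := by
    rw [div_div_div_eq]
    rw [mul_comm (γ + σ2) (1 + σ2), mul_div_mul_left _ _ (ne_of_gt h1σ)]
  have h1x : 1 - (γ + σ2) / (1 + σ2) = (1 - γ) / (1 + σ2) := by
    field_simp
    ring
  have h1p : 1 - σ2 / (1 + σ2) = 1 / (1 + σ2) := by
    field_simp
    ring
  have hratio2 : ((1 - γ) / (1 + σ2)) / (1 / (1 + σ2)) = 1 - γ := by
    rw [div_div_div_eq]
    rw [mul_comm (1 - γ) (1 + σ2), mul_div_mul_left _ _ (ne_of_gt h1σ)]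
    simp
  rw [relEntH, hratio1, h1x, h1p, hratio2]
  -- lower bound the two logs
  have ht1 : (1:ℝ) ≤ (γ + σ2) / σ2 := by
    rw [le_div_iff₀ hσ0]; linarith
  have hlog1 := logA ht1
  have hlog2 := logB (by linarith : (0:ℝ) < 1 - γ) (by linarith : (1:ℝ) - γ ≤ 1)
  have hx0 : 0 < (γ + σ2) / (1 + σ2) := by positivity
  have hy0 : 0 < (1 - γ) / (1 + σ2) := by
    apply div_pos <;> linarith
  have key1 : (γ + σ2) / (1 + σ2) * (2 * ((γ + σ2) / σ2 - 1) / ((γ + σ2) / σ2 + 1))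
      ≤ (γ + σ2) / (1 + σ2) * Real.log ((γ + σ2) / σ2) :=
    mul_le_mul_of_nonneg_left hlog1 (le_of_lt hx0)
  have key2 : (1 - γ) / (1 + σ2) * ((1 - γ) / 2 - 1 / (2 * (1 - γ)))
      ≤ (1 - γ) / (1 + σ2) * Real.log (1 - γ) :=
    mul_le_mul_of_nonneg_left hlog2 (le_of_lt hy0)
  have halg : γ ^ 2 / (3 * σ2) ≤
      (γ + σ2) / (1 + σ2) * (2 * ((γ + σ2) / σ2 - 1) / ((γ + σ2) / σ2 + 1))
        + (1 - γ) / (1 + σ2) * ((1 - γ) / 2 - 1 / (2 * (1 - γ))) := by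
    have hd1 : (0:ℝ) < γ + 2 * σ2 := by linarith
    have hd2 : (0:ℝ) < 1 - γ := by linarith
    have e1 : 2 * ((γ + σ2) / σ2 - 1) / ((γ + σ2) / σ2 + 1) = 2 * γ / (γ + 2 * σ2) := by
      rw [div_eq_div_iff]
      · field_simp
        ring
      · have : (γ + σ2) / σ2 + 1 = (γ + 2 * σ2) / σ2 := by field_simp; ring
        rw [this]
        positivity
      · positivity
    rw [e1]
    have expand : (γ + σ2) / (1 + σ2) * (2 * γ / (γ + 2 * σ2))
        + (1 - γ) / (1 + σ2) * ((1 - γ) / 2 - 1 / (2 * (1 - γ)))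
        = (4 * γ * (γ + σ2) + (γ ^ 2 - 2 * γ) * (γ + 2 * σ2))
            / (2 * (γ + 2 * σ2) * (1 + σ2)) := by
      field_simp
      ring
    rw [expand, div_le_div_iff₀ (by positivity) (by positivity)]
    nlinarith [mul_nonneg (mul_nonneg (sq_nonneg γ) hσ0.le) hγ0.le,
      mul_nonneg (mul_nonneg (sq_nonneg γ) hσ0.le) hσ0.le,
      mul_nonneg (sq_nonneg γ) (sub_pos.2 hγσ).le]
  linarith
end

section
/- Let $f : \Sigma \to [-1,1]$ be a function on a finite set $\Sigma$, $\pi$ a probability measure on $\Sigma$ with $\pi(f) = 0$ and $\pi(f^2) \le \sigma^2$. Then for every $\lambda > 0$, $\pi(e^{\lambda f}) \le \frac{1}{1+\sigma^2} e^{-\lambda \sigma^2} + \frac{\sigma^2}{1+\sigma^2} e^{\lambda}$. -/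
noncomputable def psiInt (x : ℝ) : ℝ := ∫ u in (0:ℝ)..1, (1-u) * Real.exp (u*x)

lemma psiInt_eq (x : ℝ) (hx : x ≠ 0) :
    psiInt x = (Real.exp x - 1 - x) / x ^ 2 := by
  have h : ∀ u ∈ Set.uIcc (0:ℝ) 1,
      HasDerivAt (fun u => Real.exp (u*x) * ((1-u)/x + 1/x^2)) ((1-u) * Real.exp (u*x)) u := by
    intro u _
    have h1 : HasDerivAt (fun u : ℝ => u * x) x u := by
      simpa using (hasDerivAt_id u).mul_const x
    have h2 : HasDerivAt (fun u : ℝ => Real.exp (u*x)) (Real.exp (u*x) * x) u := h1.exp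
    have h0 : HasDerivAt (fun u : ℝ => 1 - u) (-1) u := by
      simpa using (hasDerivAt_id u).const_sub 1
    have h3 : HasDerivAt (fun u : ℝ => (1-u)/x + 1/x^2) (-1/x) u :=
      (h0.div_const x).add_const (1/x^2)
    have := h2.mul h3
    refine this.congr_deriv ?_
    field_simp
    ring
  have hcont : IntervalIntegrable (fun u => (1-u) * Real.exp (u*x)) MeasureTheory.volume 0 1 :=
    (Continuous.mul (by continuity) (by continuity)).intervalIntegrable 0 1
  have := intervalIntegral.integral_eq_sub_of_hasDerivAt h hcont
  rw [psiInt, this]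
  field_simp
  rw [mul_zero, Real.exp_zero]
  ring

lemma psiInt_mono {x y : ℝ} (h : x ≤ y) : psiInt x ≤ psiInt y := by
  apply intervalIntegral.integral_mono_on (by norm_num)
    ((Continuous.mul (by continuity) (by continuity)).intervalIntegrable 0 1)
    ((Continuous.mul (by continuity) (by continuity)).intervalIntegrable 0 1)
  intro u hu
  have hu0 : 0 ≤ u := hu.1
  have hu1 : u ≤ 1 := hu.2
  have : Real.exp (u*x) ≤ Real.exp (u*y) := Real.exp_le_exp.mpr (by nlinarith)
  show (1-u) * Real.exp (u*x) ≤ (1-u) * Real.exp (u*y)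
  nlinarith [Real.exp_pos (u*x)]

lemma key_ineq (x y : ℝ) (hy : 0 < y) (hxy : x ≤ y) :
    Real.exp x - 1 - x ≤ ((Real.exp y - 1 - y) / y ^ 2) * x ^ 2 := by
  have hc : 0 ≤ (Real.exp y - 1 - y) / y ^ 2 :=
    div_nonneg (by nlinarith [Real.add_one_le_exp y]) (by positivity)
  rcases eq_or_ne x 0 with rfl | hx
  · simpa using mul_nonneg hc (sq_nonneg (0:ℝ))
  · have h1 := psiInt_mono hxy
    rw [psiInt_eq x hx, psiInt_eq y hy.ne'] at h1
    have hx2 : 0 < x ^ 2 := by positivity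
    calc Real.exp x - 1 - x = (Real.exp x - 1 - x) / x ^ 2 * x ^ 2 := by field_simp
      _ ≤ ((Real.exp y - 1 - y) / y ^ 2) * x ^ 2 := by nlinarith

/-- Bennett's lemma: if `f : Σ → [-1,1]` has mean zero and second moment at most `σ²`
under a probability vector `π` on a finite set, then for every `λ > 0`,
`π(e^{λ f}) ≤ e^{-λσ²}/(1+σ²) + σ² e^{λ}/(1+σ²)`. -/
theorem bennett_lemma {S : Type*} [Fintype S] (π : S → ℝ) (f : S → ℝ) (σ2 : ℝ)
    (hπ0 : ∀ x, 0 ≤ π x) (hπ1 : ∑ x, π x = 1)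
    (hf : ∀ x, f x ∈ Set.Icc (-1 : ℝ) 1)
    (hσ2 : 0 < σ2)
    (hmean : ∑ x, π x * f x = 0)
    (hvar : ∑ x, π x * (f x) ^ 2 ≤ σ2) :
    ∀ lam : ℝ, 0 < lam →
      ∑ x, π x * Real.exp (lam * f x) ≤
        (1 / (1 + σ2)) * Real.exp (-lam * σ2) + (σ2 / (1 + σ2)) * Real.exp lam := by
  intro L hL
  set m := σ2
  have hm : 0 < m := hσ2
  set y : ℝ := L * (1 + m) with hy_def
  have hy : 0 < y := by positivity
  set c : ℝ := (Real.exp y - 1 - y) / y ^ 2 with hc_def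
  have hc : 0 ≤ c := by
    rw [hc_def]
    exact div_nonneg (by nlinarith [Real.add_one_le_exp y]) (by positivity)
  set A : ℝ := Real.exp (-(L*m)) with hA_def
  have hA : 0 < A := Real.exp_pos _
  -- pointwise bound
  have pointwise : ∀ x, π x * Real.exp (L * f x) ≤
      π x * (A * (1 + L * (f x + m) + c * (L * (f x + m))^2)) := by
    intro x
    apply mul_le_mul_of_nonneg_left _ (hπ0 x)
    have hfx := hf x
    have hkey := key_ineq (L * (f x + m)) y hy (by nlinarith [hfx.2])
    have : Real.exp (L * f x) = A * Real.exp (L * (f x + m)) := by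
      rw [hA_def, ← Real.exp_add]; ring_nf
    rw [this]
    apply mul_le_mul_of_nonneg_left _ hA.le
    nlinarith
  have hsum : ∑ x, π x * Real.exp (L * f x) ≤
      ∑ x, π x * (A * (1 + L * (f x + m) + c * (L * (f x + m))^2)) :=
    Finset.sum_le_sum (fun x _ => pointwise x)
  refine hsum.trans ?_
  have expand : ∑ x, π x * (A * (1 + L * (f x + m) + c * (L * (f x + m))^2)) =
      (A * (1 + L*m + c*L^2*m^2)) * (∑ x, π x)
      + (A * (L + 2*c*L^2*m)) * (∑ x, π x * f x)
      + (A * c * L^2) * (∑ x, π x * (f x)^2) := by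
    rw [Finset.mul_sum, Finset.mul_sum, Finset.mul_sum, ← Finset.sum_add_distrib,
      ← Finset.sum_add_distrib]
    apply Finset.sum_congr rfl
    intro x _
    ring
  rw [expand, hπ1, hmean]
  have step : A * (1 + L*m + c*L^2*m^2) * 1 + A * (L + 2*c*L^2*m) * 0 + A * c * L^2 * (∑ x, π x * (f x)^2)
      ≤ A * (1 + L*m + c*L^2*m^2) + A * c * L^2 * m := by
    have h1 : A * c * L ^ 2 * (∑ x, π x * (f x)^2) ≤ A * c * L^2 * m :=
      mul_le_mul_of_nonneg_left hvar (by positivity)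
    linarith
  -- final algebra: equality
  have hey : Real.exp y = Real.exp L * Real.exp (L * m) := by
    rw [← Real.exp_add, hy_def]; ring_nf
  have hAe : A = (Real.exp (L*m))⁻¹ := by rw [hA_def, Real.exp_neg]
  have hm1 : (0:ℝ) < 1 + m := by linarith
  have hexp : (0:ℝ) < Real.exp (L*m) := Real.exp_pos _
  have eqn : A * (1 + L*m + c*L^2*m^2) + A * c * L^2 * m
      = 1 / (1 + m) * Real.exp (-L * m) + m / (1 + m) * Real.exp L := by
    rw [hc_def, hAe, hey, hy_def]
    rw [show -L * m = -(L * m) by ring, Real.exp_neg]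
    field_simp
    ring
  exact step.trans (le_of_eq eqn)
end
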